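/- Let L > 0 and σ ∈ {1, −1}, and let A be the real 4×4 matrix with rows: (37σ/(64√3 L⁷), 19σ/(64√3 L⁷), −11/(64L⁷), 3/(64L⁷)); (19σ/(64√3 L⁷), 37σ/(64√3 L⁷), 3/(64L⁷), −11/(64L⁷)); (107/(192L⁷), 29/(192L⁷), −37σ/(64√3 L⁷), −19σ/(64√3 L⁷)); (29/(192L⁷), 107/(192L⁷), −19σ/(64√3 L⁷), −37σ/(64√3 L⁷)). Then the characteristic polynomial of A is λ⁴ − (5/(48 L¹⁴))·λ² − 1/(96 L²⁸), and the eigenvalues of A over ℂ are exactly 1/(√6 L⁷), −1/(√6 L⁷), i/(4L⁷), −i/(4L⁷). In particular A has a real eigenvalue 1/(√6 L⁷) > 0. -/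

import Mathlib

open Real Matrix Polynomial Complex

/-- The linearization matrix `A_{5,6}` at the circular polar relative equilibria `E₅, E₆`. -/
noncomputable def A56 (L σ : ℝ) : Matrix (Fin 4) (Fin 4) ℝ :=
  !![37 * σ / (64 * Real.sqrt 3 * L ^ 7), 19 * σ / (64 * Real.sqrt 3 * L ^ 7),
      -11 / (64 * L ^ 7), 3 / (64 * L ^ 7);
     19 * σ / (64 * Real.sqrt 3 * L ^ 7), 37 * σ / (64 * Real.sqrt 3 * L ^ 7),
      3 / (64 * L ^ 7), -11 / (64 * L ^ 7);
     107 / (192 * L ^ 7), 29 / (192 * L ^ 7), -(37 * σ) / (64 * Real.sqrt 3 * L ^ 7),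
      -(19 * σ) / (64 * Real.sqrt 3 * L ^ 7);
     29 / (192 * L ^ 7), 107 / (192 * L ^ 7), -(19 * σ) / (64 * Real.sqrt 3 * L ^ 7),
      -(37 * σ) / (64 * Real.sqrt 3 * L ^ 7)]

lemma charmatrix_fin4' {R : Type*} [CommRing R] (a b c d e f g h i j k l m n o p : R) :
    charmatrix !![a,b,c,d;e,f,g,h;i,j,k,l;m,n,o,p] =
    !![X - C a, -C b, -C c, -C d;
       -C e, X - C f, -C g, -C h;
       -C i, -C j, X - C k, -C l;
       -C m, -C n, -C o, X - C p] := by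
  refine Matrix.ext fun i j => ?_
  rw [charmatrix_apply]
  fin_cases i <;> fin_cases j <;>
    simp [Matrix.diagonal_apply, Fin.ext_iff, sub_eq_neg_add] <;>
    (intro h; exact absurd h (by decide))

lemma det_fin_four' {R : Type*} [CommRing R] (M : Matrix (Fin 4) (Fin 4) R) :
    M.det =
      M 0 0 * (M 1 1 * (M 2 2 * M 3 3 - M 2 3 * M 3 2) - M 1 2 * (M 2 1 * M 3 3 - M 2 3 * M 3 1)
        + M 1 3 * (M 2 1 * M 3 2 - M 2 2 * M 3 1))
      - M 0 1 * (M 1 0 * (M 2 2 * M 3 3 - M 2 3 * M 3 2) - M 1 2 * (M 2 0 * M 3 3 - M 2 3 * M 3 0)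
        + M 1 3 * (M 2 0 * M 3 2 - M 2 2 * M 3 0))
      + M 0 2 * (M 1 0 * (M 2 1 * M 3 3 - M 2 3 * M 3 1) - M 1 1 * (M 2 0 * M 3 3 - M 2 3 * M 3 0)
        + M 1 3 * (M 2 0 * M 3 1 - M 2 1 * M 3 0))
      - M 0 3 * (M 1 0 * (M 2 1 * M 3 2 - M 2 2 * M 3 1) - M 1 1 * (M 2 0 * M 3 2 - M 2 2 * M 3 0)
        + M 1 2 * (M 2 0 * M 3 1 - M 2 1 * M 3 0)) := by
  rw [Matrix.det_succ_row_zero]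
  simp [Fin.sum_univ_succ, Matrix.det_fin_three, Matrix.submatrix_apply,
    show Fin.succAbove (2 : Fin 4) (2 : Fin 3) = 3 from rfl,
    show Fin.succAbove (3 : Fin 4) (2 : Fin 3) = 2 from rfl,
    show Fin.succAbove (1 : Fin 4) (2 : Fin 3) = 3 from rfl]
  ring

/-- For a matrix over a field, membership in the spectrum is the same as being a root of the
characteristic polynomial. -/
lemma mem_spectrum_iff_eval_charpoly {K : Type*} [Field K] {n : Type*} [Fintype n]
    [DecidableEq n] (M : Matrix n n K) (μ : K) :
    μ ∈ spectrum K M ↔ M.charpoly.eval μ = 0 := by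
  have hmat : (algebraMap K (Matrix n n K)) μ - M = (charmatrix M).map (evalRingHom μ) := by
    refine Matrix.ext fun i j => ?_
    by_cases h : i = j
    · subst h
      simp [charmatrix_apply_eq, Matrix.algebraMap_matrix_apply]
    · simp [charmatrix_apply_ne _ _ _ h, Matrix.algebraMap_matrix_apply, h]
  rw [spectrum.mem_iff, hmat, Matrix.isUnit_iff_isUnit_det, isUnit_iff_ne_zero, not_ne_iff,
    Matrix.charpoly]
  rw [show M.charmatrix.map ⇑(evalRingHom μ) = (evalRingHom μ).mapMatrix M.charmatrix from rfl,
    ← RingHom.map_det]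
  simp [coe_evalRingHom]

set_option maxHeartbeats 2000000 in
lemma A56_charpoly (L : ℝ) (hL : 0 < L) (σ : ℝ) (hσ : σ = 1 ∨ σ = -1) :
    (A56 L σ).charpoly = X ^ 4 - C (5 / (48 * L ^ 14)) * X ^ 2 - C (1 / (96 * L ^ 28)) := by
  have hL0 : L ≠ 0 := hL.ne'
  have hs0 : Real.sqrt 3 ≠ 0 := by positivity
  have hs3 : Real.sqrt 3 * Real.sqrt 3 = 3 := Real.mul_self_sqrt (by norm_num)
  set s : ℝ := Real.sqrt 3 with hs
  have hσ2 : σ ^ 2 = 1 := by rcases hσ with rfl | rfl <;> norm_num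
  have key : ∀ c : ℝ, c / (64 * s * L ^ 7) = c * s / (192 * L ^ 7) := by
    intro c
    rw [div_eq_div_iff (mul_ne_zero (mul_ne_zero (by norm_num) hs0) (pow_ne_zero _ hL0))
      (mul_ne_zero (by norm_num) (pow_ne_zero _ hL0))]
    linear_combination (-64 * c * L ^ 7) * hs3
  have hA : A56 L σ = !![37*σ*s/(192*L^7), 19*σ*s/(192*L^7), -11/(64*L^7), 3/(64*L^7);
     19*σ*s/(192*L^7), 37*σ*s/(192*L^7), 3/(64*L^7), -11/(64*L^7);
     107/(192*L^7), 29/(192*L^7), -(37*σ)*s/(192*L^7), -(19*σ)*s/(192*L^7);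
     29/(192*L^7), 107/(192*L^7), -(19*σ)*s/(192*L^7), -(37*σ)*s/(192*L^7)] := by
    unfold A56
    refine Matrix.ext fun i j => ?_
    fin_cases i <;> fin_cases j <;> simp [key, ← hs]
  apply Polynomial.funext
  intro x
  rw [hA, Matrix.charpoly, charmatrix_fin4', det_fin_four']
  simp only [Matrix.cons_val', Matrix.cons_val_zero, Matrix.cons_val_one, Matrix.head_cons,
    Matrix.empty_val', Matrix.cons_val_fin_one, Matrix.head_fin_const, Matrix.of_apply,
    Matrix.cons_val_succ, Matrix.cons_val, eval_mul, eval_add, eval_sub, eval_neg, eval_C, eval_X, eval_pow,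
    eval_one]
  field_simp
  ring_nf
  have h2 : s ^ 2 = 3 := by rw [sq]; exact hs3
  have h4 : s ^ 4 = 9 := by nlinarith [hs3]
  have hσ4 : σ ^ 4 = 1 := by nlinarith [hσ2]
  rw [h2, h4, hσ2, hσ4]
  ring

/-- The linearization at the polar equilibria `E₅, E₆` has characteristic
polynomial `λ⁴ − 5λ²/(48L¹⁴) − 1/(96L²⁸)` and eigenvalues `±1/(√6 L⁷)`, `±i/(4L⁷)`;
in particular it has the positive real eigenvalue `1/(√6 L⁷)`. -/
theorem linearization_polar56_spectrum (L : ℝ) (hL : 0 < L) (σ : ℝ)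
    (hσ : σ = 1 ∨ σ = -1) :
    (A56 L σ).charpoly = X ^ 4 - C (5 / (48 * L ^ 14)) * X ^ 2 - C (1 / (96 * L ^ 28)) ∧
    spectrum ℂ ((A56 L σ).map Complex.ofReal)
      = {((1 / (Real.sqrt 6 * L ^ 7) : ℝ) : ℂ), ((-(1 / (Real.sqrt 6 * L ^ 7)) : ℝ) : ℂ),
         Complex.I / (4 * (L : ℂ) ^ 7), -(Complex.I / (4 * (L : ℂ) ^ 7))} ∧
    (1 / (Real.sqrt 6 * L ^ 7) : ℝ) ∈ spectrum ℝ (A56 L σ) ∧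
    (0 : ℝ) < 1 / (Real.sqrt 6 * L ^ 7) := by
  have hL0 : L ≠ 0 := hL.ne'
  have hcp := A56_charpoly L hL σ hσ
  have h6 : Real.sqrt 6 * Real.sqrt 6 = 6 := Real.mul_self_sqrt (by norm_num)
  have h60 : Real.sqrt 6 ≠ 0 := by positivity
  have hLC : (L : ℂ) ≠ 0 := by exact_mod_cast hL0
  refine ⟨hcp, ?_, ?_, by positivity⟩
  · -- complex spectrum
    have hmap : ((A56 L σ).map Complex.ofReal).charpoly
        = X ^ 4 - C ((5 / (48 * L ^ 14) : ℝ) : ℂ) * X ^ 2 - C ((1 / (96 * L ^ 28) : ℝ) : ℂ) := by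
      have : (Complex.ofReal : ℝ → ℂ) = (Complex.ofRealHom : ℝ →+* ℂ) := rfl
      rw [this, Matrix.charpoly_map, hcp]
      simp [Polynomial.map_sub, Polynomial.map_pow, Polynomial.map_mul]
    ext μ
    rw [mem_spectrum_iff_eval_charpoly, hmap]
    have hfac : ∀ z : ℂ, z ^ 4 - ((5 / (48 * L ^ 14) : ℝ) : ℂ) * z ^ 2
        - ((1 / (96 * L ^ 28) : ℝ) : ℂ)
        = (z - ((1 / (Real.sqrt 6 * L ^ 7) : ℝ) : ℂ)) * (z + ((1 / (Real.sqrt 6 * L ^ 7) : ℝ) : ℂ))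
          * (z - Complex.I / (4 * (L : ℂ) ^ 7)) * (z + Complex.I / (4 * (L : ℂ) ^ 7)) := by
      intro z
      have hr2 : (((1 / (Real.sqrt 6 * L ^ 7) : ℝ) : ℂ)) ^ 2 = 1 / (6 * (L : ℂ) ^ 14) := by
        have : (1 / (Real.sqrt 6 * L ^ 7) : ℝ) ^ 2 = 1 / (6 * L ^ 14) := by
          rw [div_pow, mul_pow, Real.sq_sqrt (by norm_num : (0:ℝ) ≤ 6), one_pow, ← pow_mul]
        calc (((1 / (Real.sqrt 6 * L ^ 7) : ℝ) : ℂ)) ^ 2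
            = (((1 / (Real.sqrt 6 * L ^ 7) : ℝ) ^ 2 : ℝ) : ℂ) := by push_cast; ring
          _ = ((1 / (6 * L ^ 14) : ℝ) : ℂ) := by rw [this]
          _ = 1 / (6 * (L : ℂ) ^ 14) := by push_cast; ring
      have hI : Complex.I ^ 2 = -1 := Complex.I_sq
      have h5 : ((5 / (48 * L ^ 14) : ℝ) : ℂ) = 5 / (48 * (L : ℂ) ^ 14) := by push_cast; ring
      have h1 : ((1 / (96 * L ^ 28) : ℝ) : ℂ) = 1 / (96 * (L : ℂ) ^ 28) := by push_cast; ring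
      rw [h5, h1]
      have expand : (z - ((1 / (Real.sqrt 6 * L ^ 7) : ℝ) : ℂ)) * (z + ((1 / (Real.sqrt 6 * L ^ 7) : ℝ) : ℂ))
          * (z - Complex.I / (4 * (L : ℂ) ^ 7)) * (z + Complex.I / (4 * (L : ℂ) ^ 7))
          = (z ^ 2 - ((1 / (Real.sqrt 6 * L ^ 7) : ℝ) : ℂ) ^ 2) * (z ^ 2 - (Complex.I / (4 * (L : ℂ) ^ 7)) ^ 2) := by
        ring
      rw [expand, hr2, div_pow, hI]
      field_simp
      ring
    simp only [eval_sub, eval_pow, eval_mul, eval_C, eval_X]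
    rw [hfac μ]
    simp only [mul_eq_zero, sub_eq_zero, add_eq_zero_iff_eq_neg, Set.mem_insert_iff,
      Set.mem_singleton_iff, Complex.ofReal_neg, or_assoc]
  · -- real eigenvalue
    rw [mem_spectrum_iff_eval_charpoly, hcp]
    simp only [eval_sub, eval_pow, eval_mul, eval_C, eval_X]
    have h2 : (1 / (Real.sqrt 6 * L ^ 7)) ^ 2 = 1 / (6 * L ^ 14) := by
      rw [div_pow, mul_pow, Real.sq_sqrt (by norm_num : (0:ℝ) ≤ 6), one_pow, ← pow_mul]
    have h4 : (1 / (Real.sqrt 6 * L ^ 7)) ^ 4 = 1 / (36 * L ^ 28) := by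
      have : (1 / (Real.sqrt 6 * L ^ 7)) ^ 4 = ((1 / (Real.sqrt 6 * L ^ 7)) ^ 2) ^ 2 := by ring
      rw [this, h2, div_pow, one_pow, mul_pow, ← pow_mul]
      norm_num
    rw [h2, h4]
    field_simp
    ring
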